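/- Let R be an integral domain, p a prime element of R, and P ∈ R[u_1,...,u_r][y] a polynomial not divisible by p. Let m(u) ∈ R[u_1,...,u_r] be a polynomial containing two monomials m_1, m_2 with coefficients μ_1, μ_2 ∈ R such that μ_2 ≡ 1 (mod μ_1) and min(deg m_1, deg m_2) > deg_u(P). Then the polynomial P(u, m(u)) ∈ R[u_1,...,u_r] is not divisible by p. -/

import Mathlib

open Polynomial

/-- The total degree in the `u`-variables of a polynomial
`P ∈ R[u_1,...,u_r][y]`: the max over the `y`-coefficients of their total degree. -/
noncomputable def degU {R : Type*} [CommRing R] {r : ℕ}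
    (P : Polynomial (MvPolynomial (Fin r) R)) : ℕ :=
  P.support.sup fun i => (P.coeff i).totalDegree

namespace StmtAux

open MvPolynomial

lemma finsupp_sum_eq_degree {σ : Type*} (d : σ →₀ ℕ) :
    (d.sum fun _ e => e) = d.degree := rfl

lemma degree_le_totalDegree {σ R : Type*} [CommSemiring R] {f : MvPolynomial σ R}
    {d : σ →₀ ℕ} (h : MvPolynomial.coeff d f ≠ 0) : d.degree ≤ f.totalDegree := by
  rw [← finsupp_sum_eq_degree]
  exact MvPolynomial.le_totalDegree (by simpa [MvPolynomial.mem_support_iff] using h)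

lemma top_hc_ne_zero {σ R : Type*} [CommSemiring R] (f : MvPolynomial σ R) (hf : f ≠ 0) :
    homogeneousComponent f.totalDegree f ≠ 0 := by
  obtain ⟨d, hd, hdeg⟩ := Finset.exists_mem_eq_sup f.support
    (MvPolynomial.support_nonempty.mpr hf) (fun s => s.sum fun _ e => e)
  have hc : MvPolynomial.coeff d f ≠ 0 := (MvPolynomial.mem_support_iff).1 hd
  intro h0
  have := coeff_homogeneousComponent (φ := f) (n := f.totalDegree) d
  rw [h0] at this
  rw [if_pos (by rw [← finsupp_sum_eq_degree, ← hdeg]; rfl)] at this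
  simp only [MvPolynomial.coeff_zero] at this
  exact hc this.symm

lemma add_le_totalDegree_mul {σ R : Type*} [CommRing R] [IsDomain R]
    (f g : MvPolynomial σ R) (hf : f ≠ 0) (hg : g ≠ 0) :
    f.totalDegree + g.totalDegree ≤ (f * g).totalDegree := by
  classical
  set a := f.totalDegree with ha
  set b := g.totalDegree with hb
  set F := homogeneousComponent a f with hF
  set G := homogeneousComponent b g with hG
  have hF0 : F ≠ 0 := top_hc_ne_zero f hf
  have hG0 : G ≠ 0 := top_hc_ne_zero g hg
  have hFG : F * G ≠ 0 := mul_ne_zero hF0 hG0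
  have hFGhom : (F * G).IsHomogeneous (a + b) :=
    (homogeneousComponent_isHomogeneous a f).mul (homogeneousComponent_isHomogeneous b g)
  obtain ⟨d, hd⟩ := MvPolynomial.support_nonempty.mpr hFG
  have hcd : MvPolynomial.coeff d (F * G) ≠ 0 := (MvPolynomial.mem_support_iff).1 hd
  have hddeg : d.degree = a + b := by
    by_contra h
    exact hcd (hFGhom.coeff_eq_zero h)
  have key : MvPolynomial.coeff d (f * g) = MvPolynomial.coeff d (F * G) := by
    rw [MvPolynomial.coeff_mul, MvPolynomial.coeff_mul]
    refine Finset.sum_congr rfl ?_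
    rintro ⟨x, y⟩ hxy
    rw [Finset.HasAntidiagonal.mem_antidiagonal] at hxy
    have hsum : x.degree + y.degree = a + b := by
      rw [← hddeg, ← hxy]
      simp [Finsupp.degree_eq_weight_one, map_add]
    simp only [hF, hG, coeff_homogeneousComponent]
    by_cases hx : x.degree = a
    · have hy : y.degree = b := by omega
      rw [if_pos hx, if_pos hy]
    · rcases lt_or_gt_of_ne hx with hlt | hgt
      · have hy : b < y.degree := by omega
        have : MvPolynomial.coeff y g = 0 := by
          by_contra h
          exact absurd (degree_le_totalDegree h) (by omega)
        rw [this, if_neg (by omega)]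
        ring
      · have : MvPolynomial.coeff x f = 0 := by
          by_contra h
          exact absurd (degree_le_totalDegree h) (by omega)
        rw [this, if_neg hx]
        ring
  have : MvPolynomial.coeff d (f * g) ≠ 0 := by rw [key]; exact hcd
  calc a + b = d.degree := hddeg.symm
    _ ≤ (f * g).totalDegree := degree_le_totalDegree this

lemma le_totalDegree_pow {σ R : Type*} [CommRing R] [IsDomain R]
    (m : MvPolynomial σ R) (hm : m ≠ 0) (n : ℕ) :
    n * m.totalDegree ≤ (m ^ n).totalDegree := by
  induction n with
  | zero => simp
  | succ k ih =>
      have hpk : m ^ k ≠ 0 := pow_ne_zero _ hm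
      calc (k + 1) * m.totalDegree = k * m.totalDegree + m.totalDegree := by ring
        _ ≤ (m ^ k).totalDegree + m.totalDegree := Nat.add_le_add_right ih _
        _ ≤ (m ^ k * m).totalDegree := add_le_totalDegree_mul _ _ hpk hm
        _ = (m ^ (k + 1)).totalDegree := by rw [← pow_succ]

lemma totalDegree_eval_le {R : Type*} [CommRing R] {r : ℕ}
    (Q : Polynomial (MvPolynomial (Fin r) R)) (m : MvPolynomial (Fin r) R) :
    (Q.eval m).totalDegree ≤ degU Q + Q.natDegree * m.totalDegree := by
  unfold degU
  rw [Polynomial.eval_eq_sum, Polynomial.sum]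
  refine MvPolynomial.totalDegree_finsetSum_le ?_
  intro i hi
  calc (Q.coeff i * m ^ i).totalDegree
      ≤ (Q.coeff i).totalDegree + (m ^ i).totalDegree := MvPolynomial.totalDegree_mul _ _
    _ ≤ (Q.support.sup fun j => (Q.coeff j).totalDegree) + i * m.totalDegree := by
        refine add_le_add (Finset.le_sup (f := fun j => (Q.coeff j).totalDegree) hi) (MvPolynomial.totalDegree_pow _ _)
    _ ≤ (Q.support.sup fun j => (Q.coeff j).totalDegree) + Q.natDegree * m.totalDegree := by
        have : i ≤ Q.natDegree := Polynomial.le_natDegree_of_mem_supp i hi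
        exact Nat.add_le_add_left (Nat.mul_le_mul_right _ this) _

lemma degU_eraseLead_le {R : Type*} [CommRing R] {r : ℕ}
    (Q : Polynomial (MvPolynomial (Fin r) R)) : degU Q.eraseLead ≤ degU Q := by
  unfold degU
  refine Finset.sup_le fun i hi => ?_
  have hne : i ≠ Q.natDegree := by
    intro h
    rw [h] at hi
    exact Polynomial.notMem_support_iff.mpr (by simp [Polynomial.eraseLead_coeff_natDegree]) hi
  have hco : Q.eraseLead.coeff i = Q.coeff i := Polynomial.eraseLead_coeff_of_ne i hne
  rw [hco]
  have : i ∈ Q.support := by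
    rw [Polynomial.mem_support_iff, ← hco]
    exact Polynomial.mem_support_iff.mp hi
  exact Finset.le_sup (f := fun j => (Q.coeff j).totalDegree) this

/-- Core lemma: a nonzero polynomial evaluated at a polynomial of large total degree
is nonzero. -/
lemma eval_ne_zero_of_degU_lt {R : Type*} [CommRing R] [IsDomain R] {r : ℕ}
    (Q : Polynomial (MvPolynomial (Fin r) R)) (hQ : Q ≠ 0)
    (m : MvPolynomial (Fin r) R) (hm : degU Q < m.totalDegree) :
    Q.eval m ≠ 0 := by
  by_cases hn : Q.natDegree = 0
  · obtain ⟨c, rfl⟩ := Polynomial.natDegree_eq_zero.mp hn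
    rw [Polynomial.eval_C]
    intro h
    exact hQ (by rw [h, map_zero])
  · set n := Q.natDegree with hdefn
    set c := Q.leadingCoeff with hdefc
    have hc : c ≠ 0 := Polynomial.leadingCoeff_ne_zero.mpr hQ
    have hm0 : m ≠ 0 := by
      intro h
      rw [h, MvPolynomial.totalDegree_zero] at hm
      omega
    set D := m.totalDegree with hdefD
    have key : Q.eval m = Q.eraseLead.eval m + c * m ^ n := by
      conv_lhs => rw [← Q.eraseLead_add_C_mul_X_pow]
      simp only [Polynomial.eval_add, Polynomial.eval_mul, Polynomial.eval_C,
        Polynomial.eval_pow, Polynomial.eval_X, ← hdefc, ← hdefn]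
    have h1 : n * D ≤ (c * m ^ n).totalDegree := by
      calc n * D ≤ (m ^ n).totalDegree := le_totalDegree_pow m hm0 n
        _ ≤ c.totalDegree + (m ^ n).totalDegree := Nat.le_add_left _ _
        _ ≤ (c * m ^ n).totalDegree :=
            add_le_totalDegree_mul _ _ hc (pow_ne_zero _ hm0)
    have h2 : (Q.eraseLead.eval m).totalDegree < n * D := by
      calc (Q.eraseLead.eval m).totalDegree
          ≤ degU Q.eraseLead + Q.eraseLead.natDegree * D := totalDegree_eval_le _ _
        _ ≤ degU Q + (n - 1) * D := by
            refine add_le_add (degU_eraseLead_le Q) (Nat.mul_le_mul_right _ ?_)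
            exact Q.eraseLead_natDegree_le
        _ < n * D := by
            have h3 : degU Q < D := hm
            have h4 : 1 ≤ n := Nat.one_le_iff_ne_zero.mpr hn
            have : (n - 1) * D + D = n * D := by
              have : (n - 1) + 1 = n := by omega
              calc (n - 1) * D + D = ((n - 1) + 1) * D := by ring
                _ = n * D := by rw [this]
            omega
    intro h0
    rw [key] at h0
    have hneg : c * m ^ n = -(Q.eraseLead.eval m) := by linear_combination h0
    have := congrArg MvPolynomial.totalDegree hneg
    rw [MvPolynomial.totalDegree_neg] at this
    omega

end StmtAux

theorem stmt_12 {R : Type*} [CommRing R] [IsDomain R]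
    (r : ℕ) (p : R) (hp : Prime p)
    (P : Polynomial (MvPolynomial (Fin r) R))
    (hP : ¬ Polynomial.C (MvPolynomial.C p) ∣ P)
    (m : MvPolynomial (Fin r) R)
    (d₁ d₂ : Fin r →₀ ℕ) (hd : d₁ ≠ d₂)
    (μ₁ μ₂ : R)
    (hμ₁ : MvPolynomial.coeff d₁ m = μ₁) (hμ₂ : MvPolynomial.coeff d₂ m = μ₂)
    (hμ₁0 : μ₁ ≠ 0) (hμ₂0 : μ₂ ≠ 0)
    (hcong : μ₁ ∣ (μ₂ - 1))
    (hdeg₁ : degU P < d₁.sum fun _ n => n)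
    (hdeg₂ : degU P < d₂.sum fun _ n => n) :
    ¬ MvPolynomial.C p ∣ P.eval m := by
  classical
  intro hdvd
  set I : Ideal R := Ideal.span {p} with hI
  haveI hIp : I.IsPrime := (Ideal.span_singleton_prime hp.ne_zero).mpr hp
  set q : R →+* R ⧸ I := Ideal.Quotient.mk I with hq
  have hq0 : ∀ x : R, q x = 0 ↔ p ∣ x := fun x => by
    rw [hq, Ideal.Quotient.eq_zero_iff_mem, hI, Ideal.mem_span_singleton]
  set φ : MvPolynomial (Fin r) R →+* MvPolynomial (Fin r) (R ⧸ I) :=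
    MvPolynomial.map q with hφ
  set Q : Polynomial (MvPolynomial (Fin r) (R ⧸ I)) := P.map φ with hQ
  -- Q ≠ 0
  have hQ0 : Q ≠ 0 := by
    intro h
    apply hP
    rw [Polynomial.C_dvd_iff_dvd_coeff]
    intro n
    rw [MvPolynomial.C_dvd_iff_dvd_coeff]
    intro d
    have h1 : Q.coeff n = 0 := by rw [h, Polynomial.coeff_zero]
    rw [hQ, Polynomial.coeff_map] at h1
    have h2 := congrArg (MvPolynomial.coeff d) h1
    rw [hφ, MvPolynomial.coeff_map, MvPolynomial.coeff_zero] at h2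
    exact (hq0 _).mp h2
  -- Q.eval (φ m) = 0
  have heval : Q.eval (φ m) = 0 := by
    have hcomm : φ (P.eval m) = Q.eval (φ m) := by
      rw [hQ, Polynomial.eval_map]
      have h := Polynomial.hom_eval₂ (p := P) (f := RingHom.id _) (g := φ) m
      rw [RingHom.comp_id] at h
      exact h
    obtain ⟨t, ht⟩ := hdvd
    rw [ht, map_mul] at hcomm
    have : φ (MvPolynomial.C p) = 0 := by
      rw [hφ, MvPolynomial.map_C, (hq0 p).mpr dvd_rfl, MvPolynomial.C_0]
    rw [this, zero_mul] at hcomm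
    exact hcomm.symm
  -- degU Q ≤ degU P
  have hdegU : degU Q ≤ degU P := by
    unfold degU
    refine Finset.sup_le fun i hi => ?_
    have hsub : i ∈ P.support := Polynomial.support_map_subset _ _ hi
    have h : (Q.coeff i).totalDegree ≤ (P.coeff i).totalDegree := by
      rw [hQ, Polynomial.coeff_map, hφ, MvPolynomial.totalDegree, MvPolynomial.totalDegree]
      exact Finset.sup_mono (MvPolynomial.support_map_subset _ _)
    exact h.trans (Finset.le_sup (f := fun j => (P.coeff j).totalDegree) hsub)
  -- (φ m).totalDegree > degU Q
  have hmdeg : degU Q < (φ m).totalDegree := by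
    by_cases hpμ : p ∣ μ₁
    · -- then q μ₂ = 1, use d₂
      have h21 : q μ₂ = 1 := by
        have : q (μ₂ - 1) = 0 := (hq0 _).mpr (dvd_trans hpμ hcong)
        rw [map_sub, sub_eq_zero] at this
        simpa using this
      have hcoeff : MvPolynomial.coeff d₂ (φ m) ≠ 0 := by
        rw [hφ, MvPolynomial.coeff_map, hμ₂, h21]
        exact one_ne_zero
      calc degU Q ≤ degU P := hdegU
        _ < d₂.sum fun _ n => n := hdeg₂
        _ ≤ (φ m).totalDegree := by
            rw [StmtAux.finsupp_sum_eq_degree]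
            exact StmtAux.degree_le_totalDegree hcoeff
    · have hcoeff : MvPolynomial.coeff d₁ (φ m) ≠ 0 := by
        rw [hφ, MvPolynomial.coeff_map, hμ₁]
        exact fun h => hpμ ((hq0 _).mp h)
      calc degU Q ≤ degU P := hdegU
        _ < d₁.sum fun _ n => n := hdeg₁
        _ ≤ (φ m).totalDegree := by
            rw [StmtAux.finsupp_sum_eq_degree]
            exact StmtAux.degree_le_totalDegree hcoeff
  exact StmtAux.eval_ne_zero_of_degU_lt Q hQ0 (φ m) hmdeg heval
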